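/- Let G be the distance graph of points x₁,...,x_N in ℝ^d (connecting points at Euclidean distance < 1), where each point is at distance at most √3/4 from the line generated by (1,0,...,0). Then the complement graph of G contains no induced cycle of odd length 5 or more. -/

import Mathlib

open SimpleGraph

/-- The distance graph of a sequence of points: indices `i ≠ j` are adjacent
when the corresponding points are at distance `< 1`. -/
def distGraph {E : Type*} [NormedAddCommGroup E] {N : ℕ} (x : Fin N → E) :
    SimpleGraph (Fin N) where
  Adj i j := i ≠ j ∧ ‖x i - x j‖ < 1
  symm := by
    refine ⟨?_⟩; intro i j ⟨hij, hd⟩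
    exact ⟨hij.symm, by rwa [norm_sub_rev]⟩
  loopless := by refine ⟨?_⟩; intro i ⟨h, _⟩; exact h rfl

open RealInnerProductSpace in
private lemma pyth_le_aux {E : Type*} [NormedAddCommGroup E] [InnerProductSpace ℝ E]
    (p q : E) (hpq : ⟪p, q⟫ = (0:ℝ)) : ‖p‖ ≤ ‖p + q‖ := by
  have h := norm_add_sq_real p q
  nlinarith [norm_nonneg p, norm_nonneg (p + q), norm_nonneg q]


private lemma alt_sign_aux (w : ℕ → ℝ)
    (hstep : ∀ k : ℕ, 1/2 ≤ |w (k+1) - w k|)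
    (h2step : ∀ k : ℕ, |w (k+2) - w k| < 1)
    (n : ℕ) (hodd : Odd n) (hwn : w n = w 0) (hwn1 : w (n+1) = w 1) : False := by
  have halt : ∀ k : ℕ, (w (k+1) - w k) * (w (k+2) - w (k+1)) < 0 := by
    intro k
    have h1 := hstep k
    have h2 : 1/2 ≤ |w (k+2) - w (k+1)| := hstep (k+1)
    have h3 := h2step k
    have h3' := abs_lt.mp h3
    rcases le_or_gt (w (k+1) - w k) 0 with ha | ha
    · have ha' : w (k+1) - w k ≤ -(1/2) := by
        rcases abs_cases (w (k+1) - w k) with ⟨h, _⟩ | ⟨h, _⟩ <;> linarith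
      rcases le_or_gt (w (k+2) - w (k+1)) 0 with hb | hb
      · have hb' : w (k+2) - w (k+1) ≤ -(1/2) := by
          rcases abs_cases (w (k+2) - w (k+1)) with ⟨h, _⟩ | ⟨h, _⟩ <;> linarith
        linarith [h3'.1]
      · exact mul_neg_of_neg_of_pos (by linarith) hb
    · have ha' : 1/2 ≤ w (k+1) - w k := by
        rcases abs_cases (w (k+1) - w k) with ⟨h, _⟩ | ⟨h, _⟩ <;> linarith
      rcases le_or_gt (w (k+2) - w (k+1)) 0 with hb | hb
      · have hb' : w (k+2) - w (k+1) < 0 := by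
          rcases abs_cases (w (k+2) - w (k+1)) with ⟨h, _⟩ | ⟨h, _⟩ <;> linarith
        exact mul_neg_of_pos_of_neg ha hb'
      · have hb' : 1/2 ≤ w (k+2) - w (k+1) := by
          rcases abs_cases (w (k+2) - w (k+1)) with ⟨h, _⟩ | ⟨h, _⟩ <;> linarith
        linarith [h3'.2]
  have key : ∀ k : ℕ, (Even k → 0 < (w 1 - w 0) * (w (k+1) - w k)) ∧
      (¬ Even k → (w 1 - w 0) * (w (k+1) - w k) < 0) := by
    intro k
    induction k with
    | zero =>
      constructor
      · intro _
        have h0 := hstep 0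
        nlinarith [abs_nonneg (w 1 - w 0), sq_abs (w 1 - w 0)]
      · intro h; exact absurd Even.zero h
    | succ k ih =>
      have hk : (w (k+1) - w k) * (w (k+1+1) - w (k+1)) < 0 := halt k
      constructor
      · intro he
        have hko : ¬ Even k := by rwa [Nat.even_add_one] at he
        have hA2 := ih.2 hko
        rcases le_or_gt (w (k+1) - w k) 0 with hY | hY
        · have hX : 0 < w 1 - w 0 := by nlinarith
          have hZ : 0 < w (k+1+1) - w (k+1) := by nlinarith
          exact mul_pos hX hZ
        · have hX : w 1 - w 0 < 0 := by nlinarith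
          have hZ : w (k+1+1) - w (k+1) < 0 := by nlinarith
          exact mul_pos_of_neg_of_neg hX hZ
      · intro ho
        have hke : Even k := by rwa [Nat.even_add_one, not_not] at ho
        have hA1 := ih.1 hke
        rcases le_or_gt (w (k+1) - w k) 0 with hY | hY
        · have hX : w 1 - w 0 < 0 := by nlinarith
          have hZ : 0 < w (k+1+1) - w (k+1) := by nlinarith
          exact mul_neg_of_neg_of_pos hX hZ
        · have hX : 0 < w 1 - w 0 := by nlinarith
          have hZ : w (k+1+1) - w (k+1) < 0 := by nlinarith
          exact mul_neg_of_pos_of_neg hX hZ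
  have hfin := (key n).2 (Nat.not_even_iff_odd.mpr hodd)
  rw [hwn, hwn1] at hfin
  nlinarith [mul_self_nonneg (w 1 - w 0)]

open RealInnerProductSpace Fin.NatCast Fin.CommRing in
theorem distGraph_complement_no_long_odd_induced_cycle
    (d N : ℕ) (hd : 1 ≤ d) (x : Fin N → EuclideanSpace ℝ (Fin d))
    (e1 : EuclideanSpace ℝ (Fin d))
    (he1 : e1 = EuclideanSpace.single (⟨0, by omega⟩ : Fin d) (1 : ℝ))
    (L : Set (EuclideanSpace ℝ (Fin d)))
    (hL : L = Set.range (fun t : ℝ => t • e1))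
    (hx : ∀ i, Metric.infDist (x i) L ≤ Real.sqrt 3 / 4) :
    ¬ ∃ n : ℕ, 5 ≤ n ∧ Odd n ∧
      Nonempty (SimpleGraph.cycleGraph n ↪g (distGraph x)ᶜ) := by
  rintro ⟨n, hn5, hodd, ⟨f⟩⟩
  haveI : NeZero n := ⟨by omega⟩
  have he1n : ‖e1‖ = 1 := by rw [he1]; simp
  set t : Fin N → ℝ := fun i => ⟪x i, e1⟫ with ht
  have hperp : ∀ i, ⟪x i - t i • e1, e1⟫ = (0:ℝ) := by
    intro i
    rw [inner_sub_left, real_inner_smul_left, real_inner_self_eq_norm_sq, he1n, ht]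
    ring
  -- each point is within √3/4 of its orthogonal projection to the line
  have hA : ∀ i, ‖x i - t i • e1‖ ≤ Real.sqrt 3 / 4 := by
    intro i
    refine le_trans ?_ (hx i)
    by_contra hlt
    push_neg at hlt
    have hLne : L.Nonempty := by
      rw [hL]; exact ⟨0 • e1, ⟨0, rfl⟩⟩
    rw [Metric.infDist_lt_iff hLne] at hlt
    obtain ⟨y, hyL, hy⟩ := hlt
    rw [hL] at hyL
    obtain ⟨s, rfl⟩ := hyL
    have hdecomp : x i - s • e1 = (x i - t i • e1) + (t i - s) • e1 := by
      rw [sub_smul]; abel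
    have horth : ⟪x i - t i • e1, (t i - s) • e1⟫ = (0:ℝ) := by
      rw [real_inner_smul_right, hperp i, mul_zero]
    have hle : ‖x i - t i • e1‖ ≤ ‖x i - s • e1‖ := by
      rw [hdecomp]; exact pyth_le_aux _ _ horth
    rw [dist_eq_norm] at hy
    linarith
  -- the projection coordinate is 1-Lipschitz
  have hB : ∀ i j, |t i - t j| ≤ ‖x i - x j‖ := by
    intro i j
    have hsub : t i - t j = ⟪x i - x j, e1⟫ := by simp [ht, inner_sub_left]
    rw [hsub]
    calc |⟪x i - x j, e1⟫| ≤ ‖x i - x j‖ * ‖e1‖ := abs_real_inner_le_norm _ _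
      _ = ‖x i - x j‖ := by rw [he1n, mul_one]
  -- points at distance ≥ 1 have projections at distance ≥ 1/2
  have hC : ∀ i j, 1 ≤ ‖x i - x j‖ → 1/2 ≤ |t i - t j| := by
    intro i j hij
    set p := x i - t i • e1 with hp
    set q := x j - t j • e1 with hq
    have hdecomp : x i - x j = (p - q) + (t i - t j) • e1 := by
      rw [hp, hq, sub_smul]; abel
    have horth : ⟪p - q, (t i - t j) • e1⟫ = (0:ℝ) := by
      rw [real_inner_smul_right, inner_sub_left, hperp i, hperp j]; ring
    have hne1 : ‖(t i - t j) • e1‖ = |t i - t j| := by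
      rw [norm_smul, Real.norm_eq_abs, he1n, mul_one]
    have hsq : ‖x i - x j‖^2 = ‖p - q‖^2 + (t i - t j)^2 := by
      rw [hdecomp, norm_add_sq_real, horth, hne1, sq_abs]; ring
    have hpq : ‖p - q‖ ≤ Real.sqrt 3 / 2 := by
      calc ‖p - q‖ ≤ ‖p‖ + ‖q‖ := norm_sub_le _ _
        _ ≤ Real.sqrt 3 / 4 + Real.sqrt 3 / 4 := add_le_add (hA i) (hA j)
        _ = Real.sqrt 3 / 2 := by ring
    have h3 : Real.sqrt 3 ^ 2 = 3 := Real.sq_sqrt (by norm_num)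
    nlinarith [abs_nonneg (t i - t j), sq_abs (t i - t j), norm_nonneg (p - q),
      Real.sqrt_nonneg 3, norm_nonneg (x i - x j)]
  -- cycle adjacency forces far projections
  have hAdjC : ∀ a b : Fin n, (cycleGraph n).Adj a b → 1/2 ≤ |t (f a) - t (f b)| := by
    intro a b hab
    have h2 := f.map_adj_iff.mpr hab
    rw [SimpleGraph.compl_adj] at h2
    obtain ⟨hne, hnadj⟩ := h2
    refine hC _ _ ?_
    by_contra hlt
    push_neg at hlt
    exact hnadj ⟨hne, hlt⟩
  -- non-adjacency in the cycle forces close projections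
  have hNAdjC : ∀ a b : Fin n, a ≠ b → ¬ (cycleGraph n).Adj a b →
      |t (f a) - t (f b)| < 1 := by
    intro a b hne hnadj
    have hfne : f a ≠ f b := fun h => hne (f.injective h)
    have hnc : ¬ (distGraph x)ᶜ.Adj (f a) (f b) := fun h => hnadj (f.map_adj_iff.mp h)
    rw [SimpleGraph.compl_adj] at hnc
    push_neg at hnc
    have hadj : (distGraph x).Adj (f a) (f b) := hnc hfne
    exact lt_of_le_of_lt (hB _ _) hadj.2
  -- value of 1 and 2 in Fin n
  have h1v : ((1 : Fin n)).val = 1 := by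
    have h1 : ((1:ℕ) : Fin n) = (1 : Fin n) := by push_cast; ring
    rw [← h1, Fin.val_natCast, Nat.mod_eq_of_lt (by omega)]
  have h2v : ((2 : Fin n)).val = 2 := by
    have h1 : ((2:ℕ) : Fin n) = (2 : Fin n) := by push_cast; ring
    rw [← h1, Fin.val_natCast, Nat.mod_eq_of_lt (by omega)]
  set v : ℕ → ℝ := fun k => t (f ((k : ℕ) : Fin n)) with hv
  -- consecutive points along the cycle
  have hstep : ∀ k : ℕ, 1/2 ≤ |v (k+1) - v k| := by
    intro k
    have hadj : (cycleGraph n).Adj ((k : ℕ) : Fin n) (((k : ℕ) : Fin n) + 1) := by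
      rw [cycleGraph_adj']
      right
      have he : ((k : ℕ) : Fin n) + 1 - ((k : ℕ) : Fin n) = 1 := by ring
      rw [he, h1v]
    have hh := hAdjC _ _ hadj
    rw [abs_sub_comm] at hh
    have hcast : ((k+1 : ℕ) : Fin n) = ((k : ℕ) : Fin n) + 1 := by push_cast; ring
    simpa [hv, hcast] using hh
  -- points two apart along the cycle
  have h2step : ∀ k : ℕ, |v (k+2) - v k| < 1 := by
    intro k
    have hne : ((k : ℕ) : Fin n) ≠ ((k : ℕ) : Fin n) + 2 := by
      intro hh
      have h20 : (2 : Fin n) = 0 := left_eq_add.mp hh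
      rw [h20] at h2v
      simp at h2v
    have hnadj : ¬ (cycleGraph n).Adj ((k : ℕ) : Fin n) (((k : ℕ) : Fin n) + 2) := by
      rw [cycleGraph_adj']
      push_neg
      constructor
      · have he : ((k : ℕ) : Fin n) - (((k : ℕ) : Fin n) + 2) = -2 := by ring
        rw [he]
        have hneg : (-2 : Fin n) = ((n - 2 : ℕ) : Fin n) := by
          rw [Fin.neg_def]
          ext
          simp only [Fin.val_natCast, h2v]
          all_goals omega
        rw [hneg, Fin.val_natCast, Nat.mod_eq_of_lt (by omega)]
        omega
      · have he : ((k : ℕ) : Fin n) + 2 - ((k : ℕ) : Fin n) = 2 := by ring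
        rw [he, h2v]; omega
    have hh := hNAdjC _ _ hne hnadj
    rw [abs_sub_comm] at hh
    have hcast : ((k+2 : ℕ) : Fin n) = ((k : ℕ) : Fin n) + 2 := by push_cast; ring
    simpa [hv, hcast] using hh
  have hcast0 : ((n : ℕ) : Fin n) = ((0 : ℕ) : Fin n) := by simp
  have hcast1 : ((n + 1 : ℕ) : Fin n) = ((1 : ℕ) : Fin n) := by
    push_cast
    rw [Fin.natCast_self, zero_add]
  have hvn : v n = v 0 := by simp only [hv]; rw [hcast0]
  have hvn1 : v (n + 1) = v 1 := by simp only [hv]; rw [hcast1]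
  exact alt_sign_aux v hstep h2step n hodd hvn hvn1
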